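/- arXiv:math/0401248 — 2 statements merged into one kernel-verified Lean document; each statement's English description precedes it below -/
import Mathlib

section
/- For every f : ℕ^Λ → ℝ and every n = 1,2,…,N, ν_Λ^N[f | η̄_{Λ₁} = n] − ν_Λ^N[f | η̄_{Λ₁} = n−1] = (γ(n−1)/γ(n)) · (1/(nL)) · ( ν_Λ^N[ Σ_{x∈Λ₁, y∈Λ₂} h(η_x) c(η_y) ∂_{yx}f | η̄_{Λ₁} = n−1 ] + ν_Λ^N[ f , Σ_{x∈Λ₁, y∈Λ₂} h(η_x) c(η_y) | η̄_{Λ₁} = n−1 ] ), where h(n) := (n+1)/c(n+1). -/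
open scoped BigOperators

noncomputable section

/-- `cfact c k = c(k)! = c(1)⋯c(k)`, with `cfact c 0 = 1`. -/
def cfact (c : ℕ → ℝ) : ℕ → ℝ
  | 0 => 1
  | k + 1 => cfact c k * c (k + 1)

/-- The configuration obtained from `η` by moving one particle from `x` to `y` (`x ≠ y`),
i.e. `η - δ^x + δ^y`. -/
def move (η : ℤ → ℕ) (x y : ℤ) : ℤ → ℕ :=
  fun z => if z = x then η x - 1 else if z = y then η y + 1 else η z

/-- Unnormalized weight of the canonical measure `ν_Λ^N` on configurations supported in `Λ`
with `N` particles: `∏_{x∈Λ} 1/c(η_x)!`. -/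
def nuW (c : ℕ → ℝ) (Λ : Finset ℤ) (N : ℕ) : (ℤ → ℕ) → ℝ :=
  Set.indicator {η : ℤ → ℕ | (∀ x, x ∉ Λ → η x = 0) ∧ (∑ x ∈ Λ, η x) = N}
    (fun η => ∏ x ∈ Λ, (cfact c (η x))⁻¹)

/-- Expectation with respect to the probability measure obtained by normalizing the
nonnegative weight `w`. -/
def wE (w f : (ℤ → ℕ) → ℝ) : ℝ :=
  (∑' η : ℤ → ℕ, w η * f η) / (∑' η : ℤ → ℕ, w η)

/-- Covariance `μ[f,g] = μ[f g] - μ[f] μ[g]`. -/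
def wCov (w f g : (ℤ → ℕ) → ℝ) : ℝ :=
  wE w (fun η => f η * g η) - wE w f * wE w g

/-- Entropy `Ent_μ(f) = μ[f log f] - μ[f] log μ[f]` (note `Real.log 0 = 0`, giving the
convention `0 log 0 = 0`). -/
def wEnt (w f : (ℤ → ℕ) → ℝ) : ℝ :=
  wE w (fun η => f η * Real.log (f η)) - wE w f * Real.log (wE w f)

/-- Dirichlet form of the zero-range process on `Λ`:
`E(f,g) = (1/2) Σ_{x∈Λ} Σ_{y∈Λ, |x-y|=1} μ[c(η_x) ∂_{xy}f ∂_{xy}g]`. -/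
def wDir (c : ℕ → ℝ) (Λ : Finset ℤ) (w f g : (ℤ → ℕ) → ℝ) : ℝ :=
  wE w (fun η => (1 / 2) * ∑ x ∈ Λ, ∑ y ∈ Λ,
    if |x - y| = 1 then c (η x) * ((f (move η x y) - f η) * (g (move η x y) - g η)) else 0)

/-- Weight conditioned on the event `∑_{x ∈ Λ₁} η x = n`. -/
def condW (w : (ℤ → ℕ) → ℝ) (Λ₁ : Finset ℤ) (n : ℕ) : (ℤ → ℕ) → ℝ :=
  Set.indicator {η : ℤ → ℕ | (∑ x ∈ Λ₁, η x) = n} w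

/-- `h(n) = (n+1)/c(n+1)`. -/
def hfun (c : ℕ → ℝ) (n : ℕ) : ℝ := (n + 1) / c (n + 1)

/-- The segment `Λ₁ = [a, a+L) ∩ ℤ`. -/
def seg1 (a : ℤ) (L : ℕ) : Finset ℤ := Finset.Ico a (a + (L : ℤ))

/-- The adjacent segment `Λ₂ = [a+L, a+2L) ∩ ℤ`. -/
def seg2 (a : ℤ) (L : ℕ) : Finset ℤ := Finset.Ico (a + (L : ℤ)) (a + 2 * (L : ℤ))

/-- `Λ = Λ₁ ∪ Λ₂ = [a, a+2L) ∩ ℤ`. -/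
def segL (a : ℤ) (L : ℕ) : Finset ℤ := Finset.Ico a (a + 2 * (L : ℤ))

/-- `γ(n) = ν_Λ^N[η̄_{Λ₁} = n]`. -/
def gammaP (c : ℕ → ℝ) (a : ℤ) (L N : ℕ) (n : ℕ) : ℝ :=
  wE (nuW c (segL a L) N)
    (Set.indicator {η : ℤ → ℕ | (∑ x ∈ seg1 a L, η x) = n} (fun _ => (1 : ℝ)))

open scoped Classical

private lemma cfact_pos {c : ℕ → ℝ} (hcpos : ∀ n : ℕ, 0 < n → 0 < c n) (k : ℕ) :
    0 < cfact c k := by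
  induction k with
  | zero => simp [cfact]
  | succ k ih => have := hcpos (k+1) (Nat.succ_pos k); simp [cfact]; positivity

private lemma condW_nuW_apply (c : ℕ → ℝ) (Λ Λ₁ : Finset ℤ) (N k : ℕ) (η : ℤ → ℕ) :
    condW (nuW c Λ N) Λ₁ k η =
      if (∑ x ∈ Λ₁, η x) = k ∧ (∀ x, x ∉ Λ → η x = 0) ∧ (∑ x ∈ Λ, η x) = N then
        ∏ x ∈ Λ, (cfact c (η x))⁻¹
      else 0 := by
  simp only [condW, nuW, Set.indicator_apply, Set.mem_setOf_eq]
  split_ifs <;> tauto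

private lemma move_move {η : ℤ → ℕ} {u v : ℤ} (huv : u ≠ v) (h : 1 ≤ η u) :
    move (move η u v) v u = η := by
  funext z
  by_cases h1 : z = u <;> by_cases h2 : z = v <;>
    simp_all [move] <;> omega
private lemma sum_move_gain {A : Finset ℤ} {u v : ℤ} (hv : v ∈ A) (hu : u ∉ A) (η : ℤ → ℕ) :
    (∑ z ∈ A, move η u v z) = (∑ z ∈ A, η z) + 1 := by
  have huv : v ≠ u := fun h => hu (h ▸ hv)
  have h1 : move η u v v = η v + 1 := by simp [move, huv]
  have h2 : ∀ z ∈ A.erase v, move η u v z = η z := by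
    intro z hz
    have hzv := Finset.ne_of_mem_erase hz
    have hzu : z ≠ u := fun h => hu (h ▸ Finset.mem_of_mem_erase hz)
    simp [move, hzv, hzu]
  have e1 : ∑ z ∈ A, move η u v z = move η u v v + ∑ z ∈ A.erase v, move η u v z :=
    (Finset.add_sum_erase A _ hv).symm
  have e2 : ∑ z ∈ A, η z = η v + ∑ z ∈ A.erase v, η z := (Finset.add_sum_erase A _ hv).symm
  have e3 : ∑ z ∈ A.erase v, move η u v z = ∑ z ∈ A.erase v, η z := Finset.sum_congr rfl h2
  rw [e1, e2, e3, h1]; omega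

private lemma sum_move_lose {A : Finset ℤ} {u v : ℤ} (hu : u ∈ A) (hv : v ∉ A) (η : ℤ → ℕ)
    (h : 1 ≤ η u) : (∑ z ∈ A, move η u v z) + 1 = ∑ z ∈ A, η z := by
  have h1 : move η u v u = η u - 1 := by simp [move]
  have h2 : ∀ z ∈ A.erase u, move η u v z = η z := by
    intro z hz
    have hzu := Finset.ne_of_mem_erase hz
    have hzv : z ≠ v := fun h => hv (h ▸ Finset.mem_of_mem_erase hz)
    simp [move, hzu, hzv]
  have e1 : ∑ z ∈ A, move η u v z = move η u v u + ∑ z ∈ A.erase u, move η u v z :=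
    (Finset.add_sum_erase A _ hu).symm
  have e2 : ∑ z ∈ A, η z = η u + ∑ z ∈ A.erase u, η z := (Finset.add_sum_erase A _ hu).symm
  have e3 : ∑ z ∈ A.erase u, move η u v z = ∑ z ∈ A.erase u, η z := Finset.sum_congr rfl h2
  rw [e1, e2, e3, h1]; omega

private lemma sum_move_both {A : Finset ℤ} {u v : ℤ} (hu : u ∈ A) (hv : v ∈ A) (huv : u ≠ v)
    (η : ℤ → ℕ) (h : 1 ≤ η u) : (∑ z ∈ A, move η u v z) = ∑ z ∈ A, η z := by
  have hv' : v ∈ A.erase u := Finset.mem_erase.mpr ⟨huv.symm, hv⟩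
  have h1 : move η u v u = η u - 1 := by simp [move]
  have h2 : move η u v v = η v + 1 := by simp [move, huv.symm]
  have h3 : ∀ z ∈ (A.erase u).erase v, move η u v z = η z := by
    intro z hz
    have hzv := Finset.ne_of_mem_erase hz
    have hzu := Finset.ne_of_mem_erase (Finset.mem_of_mem_erase hz)
    simp [move, hzu, hzv]
  have e1 : ∑ z ∈ A, move η u v z = move η u v u + ∑ z ∈ A.erase u, move η u v z :=
    (Finset.add_sum_erase A _ hu).symm
  have e2 : ∑ z ∈ A, η z = η u + ∑ z ∈ A.erase u, η z := (Finset.add_sum_erase A _ hu).symm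
  have e3 : ∑ z ∈ A.erase u, move η u v z
      = move η u v v + ∑ z ∈ (A.erase u).erase v, move η u v z :=
    (Finset.add_sum_erase _ _ hv').symm
  have e4 : ∑ z ∈ A.erase u, η z = η v + ∑ z ∈ (A.erase u).erase v, η z :=
    (Finset.add_sum_erase _ _ hv').symm
  have e5 : ∑ z ∈ (A.erase u).erase v, move η u v z = ∑ z ∈ (A.erase u).erase v, η z :=
    Finset.sum_congr rfl h3
  rw [e1, e2, e3, e4, e5, h1, h2]; omega

private lemma prod_move {c : ℕ → ℝ} (hcpos : ∀ n : ℕ, 0 < n → 0 < c n) {Λ : Finset ℤ} {u v : ℤ}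
    (hu : u ∈ Λ) (hv : v ∈ Λ) (huv : u ≠ v) (η : ℤ → ℕ) (h : 1 ≤ η u) :
    (∏ z ∈ Λ, (cfact c (move η u v z))⁻¹) =
      (∏ z ∈ Λ, (cfact c (η z))⁻¹) * (c (η u) / c (η v + 1)) := by
  have hcfact : ∀ k, 0 < cfact c k := by
    intro k; induction k with
    | zero => simp [cfact]
    | succ k ih => have := hcpos (k+1) (Nat.succ_pos k); simp [cfact]; positivity
  have hv' : v ∈ Λ.erase u := Finset.mem_erase.mpr ⟨huv.symm, hv⟩
  have h1 : move η u v u = η u - 1 := by simp [move]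
  have h2 : move η u v v = η v + 1 := by simp [move, huv.symm]
  have h3 : ∀ z ∈ (Λ.erase u).erase v, move η u v z = η z := by
    intro z hz
    have hzv := Finset.ne_of_mem_erase hz
    have hzu := Finset.ne_of_mem_erase (Finset.mem_of_mem_erase hz)
    simp [move, hzu, hzv]
  have e1 : ∏ z ∈ Λ, (cfact c (move η u v z))⁻¹
      = (cfact c (move η u v u))⁻¹ * ∏ z ∈ Λ.erase u, (cfact c (move η u v z))⁻¹ :=
    (Finset.mul_prod_erase Λ _ hu).symm
  have e2 : ∏ z ∈ Λ, (cfact c (η z))⁻¹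
      = (cfact c (η u))⁻¹ * ∏ z ∈ Λ.erase u, (cfact c (η z))⁻¹ :=
    (Finset.mul_prod_erase Λ _ hu).symm
  have e3 : ∏ z ∈ Λ.erase u, (cfact c (move η u v z))⁻¹
      = (cfact c (move η u v v))⁻¹ * ∏ z ∈ (Λ.erase u).erase v, (cfact c (move η u v z))⁻¹ :=
    (Finset.mul_prod_erase _ _ hv').symm
  have e4 : ∏ z ∈ Λ.erase u, (cfact c (η z))⁻¹
      = (cfact c (η v))⁻¹ * ∏ z ∈ (Λ.erase u).erase v, (cfact c (η z))⁻¹ :=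
    (Finset.mul_prod_erase _ _ hv').symm
  have e5 : ∏ z ∈ (Λ.erase u).erase v, (cfact c (move η u v z))⁻¹
      = ∏ z ∈ (Λ.erase u).erase v, (cfact c (η z))⁻¹ :=
    Finset.prod_congr rfl (fun z hz => by rw [h3 z hz])
  rw [e1, e2, e3, e4, e5, h1, h2]
  obtain ⟨k, hk⟩ : ∃ k, η u = k + 1 := ⟨η u - 1, by omega⟩
  rw [hk]
  simp only [Nat.add_sub_cancel, cfact]
  have h4 := (hcfact k).ne'
  have h5 := (hcfact (η v)).ne'
  have h6 := (hcpos (k+1) (Nat.succ_pos k)).ne'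
  have h7 := (hcpos (η v + 1) (Nat.succ_pos _)).ne'
  have key : ∀ (A B C D P : ℝ), A ≠ 0 → B ≠ 0 → C ≠ 0 → D ≠ 0 →
      A⁻¹ * ((B * D)⁻¹ * P) = (A * C)⁻¹ * (B⁻¹ * P) * (C / D) := by
    intro A B C D P hA hB hC hD; field_simp
  exact key _ _ _ _ _ h4 h5 h6 h7

private lemma support_finite (Λ : Finset ℤ) (N : ℕ) :
    {η : ℤ → ℕ | (∀ x, x ∉ Λ → η x = 0) ∧ (∑ x ∈ Λ, η x) = N}.Finite := by
  rw [Set.finite_coe_iff.symm]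
  apply Finite.of_injective
    (f := fun η : {η : ℤ → ℕ | (∀ x, x ∉ Λ → η x = 0) ∧ (∑ x ∈ Λ, η x) = N} =>
      (fun x : Λ => (⟨η.1 x.1, by
        have hb : η.1 x.1 ≤ ∑ z ∈ Λ, η.1 z :=
          Finset.single_le_sum (fun z _ => Nat.zero_le _) x.2
        have := η.2.2
        omega⟩ : Fin (N+1))))
  intro η η' hh
  apply Subtype.ext
  funext z
  by_cases hz : z ∈ Λ
  · have := congrFun hh ⟨z, hz⟩
    simpa [Fin.mk.injEq] using this
  · rw [η.2.1 z hz, η'.2.1 z hz]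

private lemma summable_aux (c : ℕ → ℝ) (Λ Λ₁ : Finset ℤ) (N k : ℕ) (g : (ℤ → ℕ) → ℝ) :
    Summable (fun η : ℤ → ℕ => condW (nuW c Λ N) Λ₁ k η * g η) := by
  apply summable_of_ne_finset_zero (s := (support_finite Λ N).toFinset)
  intro η hη
  have h0 : nuW c Λ N η = 0 :=
    Set.indicator_of_notMem (by simpa using hη) _
  simp [condW, Set.indicator_apply, h0]

private lemma condW_nonneg {c : ℕ → ℝ} (hcpos : ∀ n : ℕ, 0 < n → 0 < c n)
    (Λ Λ₁ : Finset ℤ) (N k : ℕ) (η : ℤ → ℕ) : 0 ≤ condW (nuW c Λ N) Λ₁ k η := by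
  rw [condW_nuW_apply]
  split_ifs
  · exact Finset.prod_nonneg fun z _ => inv_nonneg.mpr (cfact_pos hcpos _).le
  · exact le_refl 0

private lemma hfun_pos {c : ℕ → ℝ} (hcpos : ∀ n : ℕ, 0 < n → 0 < c n) (k : ℕ) :
    0 < hfun c k := by
  apply div_pos _ (hcpos (k+1) (Nat.succ_pos k))
  positivity

private lemma change_var (c : ℕ → ℝ) (hc0 : c 0 = 0) (hcpos : ∀ n : ℕ, 0 < n → 0 < c n)
    (Λ₁ Λ₂ : Finset ℤ) (hdisj : Disjoint Λ₁ Λ₂) (N m : ℕ)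
    {x y : ℤ} (hx : x ∈ Λ₁) (hy : y ∈ Λ₂) (φ : (ℤ → ℕ) → ℝ) :
    ∑' η : ℤ → ℕ, condW (nuW c (Λ₁ ∪ Λ₂) N) Λ₁ (m + 1) η * ((η x : ℝ) * φ η)
      = ∑' ζ : ℤ → ℕ, condW (nuW c (Λ₁ ∪ Λ₂) N) Λ₁ m ζ *
          (hfun c (ζ x) * c (ζ y) * φ (move ζ y x)) := by
  classical
  have hxy : x ≠ y := fun h => (Finset.disjoint_left.mp hdisj hx) (h ▸ hy)
  have hyΛ₁ : y ∉ Λ₁ := Finset.disjoint_right.mp hdisj hy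
  have hxΛ : x ∈ Λ₁ ∪ Λ₂ := Finset.mem_union_left _ hx
  have hyΛ : y ∈ Λ₁ ∪ Λ₂ := Finset.mem_union_right _ hy
  set Λ := Λ₁ ∪ Λ₂ with hΛ
  set F : (ℤ → ℕ) → ℝ :=
    fun η => condW (nuW c Λ N) Λ₁ (m + 1) η * ((η x : ℝ) * φ η) with hF
  set G : (ℤ → ℕ) → ℝ :=
    fun ζ => condW (nuW c Λ N) Λ₁ m ζ * (hfun c (ζ x) * c (ζ y) * φ (move ζ y x)) with hG
  -- facts about elements of the support of G
  have hsupG : ∀ ζ : ℤ → ℕ, G ζ ≠ 0 →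
      (∑ z ∈ Λ₁, ζ z) = m ∧ (∀ z, z ∉ Λ → ζ z = 0) ∧ (∑ z ∈ Λ, ζ z) = N ∧ 1 ≤ ζ y := by
    intro ζ hζ
    have h1 : condW (nuW c Λ N) Λ₁ m ζ ≠ 0 := fun h => hζ (by simp [hG, h])
    have h2 : c (ζ y) ≠ 0 := fun h => hζ (by simp [hG, h])
    rw [condW_nuW_apply] at h1
    by_cases hcond : (∑ z ∈ Λ₁, ζ z) = m ∧ (∀ z, z ∉ Λ → ζ z = 0) ∧ (∑ z ∈ Λ, ζ z) = N
    · refine ⟨hcond.1, hcond.2.1, hcond.2.2, ?_⟩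
      by_contra hle
      have : ζ y = 0 := by omega
      exact h2 (by rw [this, hc0])
    · exact absurd (by rw [if_neg hcond]) h1
  apply tsum_eq_tsum_of_ne_zero_bij (fun ζ : Function.support G => move ζ.1 y x)
  · -- injectivity
    intro ζ₁ ζ₂ hmv
    have h1 := (hsupG ζ₁.1 ζ₁.2).2.2.2
    have h2 := (hsupG ζ₂.1 ζ₂.2).2.2.2
    have e1 : move (move ζ₁.1 y x) x y = ζ₁.1 := move_move (fun h => hxy h.symm) h1
    have e2 : move (move ζ₂.1 y x) x y = ζ₂.1 := move_move (fun h => hxy h.symm) h2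
    apply Subtype.ext
    rw [← e1, ← e2]
    exact congrArg (fun η => move η x y) hmv
  · -- support F ⊆ range
    intro η hη
    have h1 : condW (nuW c Λ N) Λ₁ (m+1) η ≠ 0 := fun h => hη (by simp [hF, h])
    have hηx : 1 ≤ η x := by
      by_contra hle
      exact hη (by simp [hF, show η x = 0 by omega])
    have hφη : φ η ≠ 0 := fun h => hη (by simp [hF, h])
    rw [condW_nuW_apply] at h1
    have hcond : (∑ z ∈ Λ₁, η z) = m + 1 ∧ (∀ z, z ∉ Λ → η z = 0) ∧ (∑ z ∈ Λ, η z) = N := by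
      by_contra hcond
      exact absurd (by rw [if_neg hcond]) h1
    set ζ := move η x y with hζ
    have hback : move ζ y x = η := move_move hxy hηx
    have hζy : ζ y = η y + 1 := by simp [hζ, move, hxy.symm]
    have hζG : G ζ ≠ 0 := by
      have hc1 : (∑ z ∈ Λ₁, ζ z) = m := by
        rw [hζ]
        have := sum_move_lose hx hyΛ₁ η hηx
        have h4 := hcond.1
        omega
      have hc2 : ∀ z, z ∉ Λ → ζ z = 0 := by
        intro z hz
        have hzx : z ≠ x := fun h => hz (h ▸ hxΛ)
        have hzy : z ≠ y := fun h => hz (h ▸ hyΛ)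
        simp only [hζ, move, if_neg hzx, if_neg hzy]
        exact hcond.2.1 z hz
      have hc3 : (∑ z ∈ Λ, ζ z) = N := by
        rw [hζ, sum_move_both hxΛ hyΛ hxy η hηx]
        exact hcond.2.2
      have hval : condW (nuW c Λ N) Λ₁ m ζ ≠ 0 := by
        rw [condW_nuW_apply, if_pos ⟨hc1, hc2, hc3⟩]
        exact Finset.prod_ne_zero_iff.mpr
          (fun z _ => inv_ne_zero (cfact_pos hcpos _).ne')
      simp only [hG]
      apply mul_ne_zero hval
      apply mul_ne_zero (mul_ne_zero (hfun_pos hcpos _).ne' _)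
      · rw [hback]; exact hφη
      · rw [hζy]; exact (hcpos _ (Nat.succ_pos _)).ne'
    exact ⟨⟨ζ, hζG⟩, hback⟩
  · -- value equality
    rintro ⟨ζ, hζ⟩
    obtain ⟨c1, c2, c3, hζy⟩ := hsupG ζ hζ
    have hmx : move ζ y x x = ζ x + 1 := by simp [move, hxy]
    have hcondη : (∑ z ∈ Λ₁, move ζ y x z) = m + 1 ∧
        (∀ z, z ∉ Λ → move ζ y x z = 0) ∧ (∑ z ∈ Λ, move ζ y x z) = N := by
      refine ⟨?_, ?_, ?_⟩
      · rw [sum_move_gain hx hyΛ₁ ζ, c1]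
      · intro z hz
        have hzx : z ≠ x := fun h => hz (h ▸ hxΛ)
        have hzy : z ≠ y := fun h => hz (h ▸ hyΛ)
        simp only [move, if_neg hzx, if_neg hzy]
        exact c2 z hz
      · rw [sum_move_both hyΛ hxΛ (fun h => hxy h.symm) ζ hζy]
        exact c3
    simp only [hF, hG]
    rw [condW_nuW_apply, if_pos hcondη, condW_nuW_apply, if_pos ⟨c1, c2, c3⟩]
    rw [prod_move hcpos hyΛ hxΛ (fun h => hxy h.symm) ζ hζy, hmx]
    rw [hfun]
    push_cast
    ring

private lemma condW_eq_zero {c : ℕ → ℝ} {Λ Λ₁ : Finset ℤ} {N k : ℕ} {η : ℤ → ℕ}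
    (h : nuW c Λ N η = 0) : condW (nuW c Λ N) Λ₁ k η = 0 := by
  simp [condW, Set.indicator_apply, h]

private lemma summable_vanish (c : ℕ → ℝ) (Λ : Finset ℤ) (N : ℕ) (F : (ℤ → ℕ) → ℝ)
    (h : ∀ η, nuW c Λ N η = 0 → F η = 0) : Summable F := by
  apply summable_of_ne_finset_zero (s := (support_finite Λ N).toFinset)
  intro η hη
  exact h η (Set.indicator_of_notMem (by simpa using hη) _)

private lemma nuW_zero_of_condW_ne {c : ℕ → ℝ} {Λ Λ₁ : Finset ℤ} {N k : ℕ} {η : ℤ → ℕ} :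
    nuW c Λ N η = 0 → condW (nuW c Λ N) Λ₁ k η * 0 = 0 := fun _ => mul_zero _

private lemma key_identity (c : ℕ → ℝ) (hc0 : c 0 = 0) (hcpos : ∀ n : ℕ, 0 < n → 0 < c n)
    (Λ₁ Λ₂ : Finset ℤ) (hdisj : Disjoint Λ₁ Λ₂) (N m : ℕ) (f : (ℤ → ℕ) → ℝ) :
    ((m : ℝ) + 1) * (Λ₂.card : ℝ) *
        (∑' η : ℤ → ℕ, condW (nuW c (Λ₁ ∪ Λ₂) N) Λ₁ (m + 1) η * f η)
      = ∑' ζ : ℤ → ℕ, condW (nuW c (Λ₁ ∪ Λ₂) N) Λ₁ m ζ *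
          (∑ x ∈ Λ₁, ∑ y ∈ Λ₂, hfun c (ζ x) * c (ζ y) * f (move ζ y x)) := by
  classical
  set Λ := Λ₁ ∪ Λ₂ with hΛ
  have e0 : ((m : ℝ) + 1) * (Λ₂.card : ℝ) *
        (∑' η : ℤ → ℕ, condW (nuW c Λ N) Λ₁ (m + 1) η * f η)
      = ∑' η : ℤ → ℕ, ∑ x ∈ Λ₁, ∑ y ∈ Λ₂,
          condW (nuW c Λ N) Λ₁ (m + 1) η * ((η x : ℝ) * f η) := by
    rw [← tsum_mul_left]
    apply tsum_congr
    intro η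
    by_cases h : condW (nuW c Λ N) Λ₁ (m+1) η = 0
    · simp [h]
    · have hsum : (∑ z ∈ Λ₁, η z) = m + 1 := by
        rw [condW_nuW_apply] at h
        by_cases hcond : (∑ z ∈ Λ₁, η z) = m + 1 ∧ (∀ z, z ∉ Λ → η z = 0) ∧ (∑ z ∈ Λ, η z) = N
        · exact hcond.1
        · exact absurd (by rw [if_neg hcond]) h
      have inner : ∀ x : ℤ, (∑ y ∈ Λ₂, condW (nuW c Λ N) Λ₁ (m + 1) η * ((η x : ℝ) * f η))
          = (Λ₂.card : ℝ) * (condW (nuW c Λ N) Λ₁ (m + 1) η * ((η x : ℝ) * f η)) := by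
        intro x; rw [Finset.sum_const, nsmul_eq_mul]
      rw [Finset.sum_congr rfl (fun x _ => inner x), ← Finset.mul_sum]
      have outer : (∑ x ∈ Λ₁, condW (nuW c Λ N) Λ₁ (m + 1) η * ((η x : ℝ) * f η))
          = condW (nuW c Λ N) Λ₁ (m + 1) η * f η * ((m : ℝ) + 1) := by
        have : ∀ x ∈ Λ₁, condW (nuW c Λ N) Λ₁ (m + 1) η * ((η x : ℝ) * f η)
            = (condW (nuW c Λ N) Λ₁ (m + 1) η * f η) * (η x : ℝ) := fun x _ => by ring
        rw [Finset.sum_congr rfl this, ← Finset.mul_sum]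
        congr 1
        rw [← Nat.cast_sum, hsum]
        push_cast; ring
      rw [outer]; ring
  rw [e0]
  have summ1 : ∀ (k : ℕ) (g : ℤ → (ℤ → ℕ) → ℝ) (x : ℤ),
      Summable (fun η : ℤ → ℕ => ∑ y ∈ Λ₂, condW (nuW c Λ N) Λ₁ k η * g y η) := by
    intro k g x
    apply summable_vanish c Λ N
    intro η h
    simp [condW_eq_zero h]
  have summ2 : ∀ (k : ℕ) (g : (ℤ → ℕ) → ℝ),
      Summable (fun η : ℤ → ℕ => condW (nuW c Λ N) Λ₁ k η * g η) := by
    intro k g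
    apply summable_vanish c Λ N
    intro η h
    simp [condW_eq_zero h]
  rw [Summable.tsum_finsetSum (fun x _ => summ1 (m+1) (fun y η => (η x : ℝ) * f η) x)]
  have e1 : ∀ x ∈ Λ₁, (∑' η : ℤ → ℕ, ∑ y ∈ Λ₂,
        condW (nuW c Λ N) Λ₁ (m + 1) η * ((η x : ℝ) * f η))
      = ∑ y ∈ Λ₂, ∑' ζ : ℤ → ℕ, condW (nuW c Λ N) Λ₁ m ζ *
          (hfun c (ζ x) * c (ζ y) * f (move ζ y x)) := by
    intro x hx
    rw [Summable.tsum_finsetSum (fun y _ => summ2 (m+1) _)]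
    exact Finset.sum_congr rfl (fun y hy => change_var c hc0 hcpos Λ₁ Λ₂ hdisj N m hx hy f)
  rw [Finset.sum_congr rfl e1]
  rw [Finset.sum_congr rfl (fun x (hx : x ∈ Λ₁) =>
    (Summable.tsum_finsetSum (fun y _ => summ2 m _)).symm)]
  rw [← Summable.tsum_finsetSum (fun x _ => summ1 m (fun y ζ => hfun c (ζ x) * c (ζ y) * f (move ζ y x)) x)]
  apply tsum_congr
  intro ζ
  rw [Finset.mul_sum]
  exact Finset.sum_congr rfl (fun x _ => (Finset.mul_sum _ _ _).symm)

private lemma seg_union (a : ℤ) (L : ℕ) : seg1 a L ∪ seg2 a L = segL a L := by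
  unfold seg1 seg2 segL
  rw [Finset.Ico_union_Ico_eq_Ico] <;> omega

private lemma seg_disj (a : ℤ) (L : ℕ) : Disjoint (seg1 a L) (seg2 a L) :=
  Finset.Ico_disjoint_Ico_consecutive _ _ _

private lemma seg2_card (a : ℤ) (L : ℕ) : (seg2 a L).card = L := by
  unfold seg2
  rw [Int.card_Ico]
  omega

private lemma nuW_nonneg {c : ℕ → ℝ} (hcpos : ∀ n : ℕ, 0 < n → 0 < c n)
    (Λ : Finset ℤ) (N : ℕ) (η : ℤ → ℕ) : 0 ≤ nuW c Λ N η := by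
  unfold nuW
  apply Set.indicator_nonneg
  intro η _
  exact Finset.prod_nonneg fun z _ => inv_nonneg.mpr (cfact_pos hcpos _).le

private lemma witness_cond {c : ℕ → ℝ} (hcpos : ∀ n : ℕ, 0 < n → 0 < c n)
    (a : ℤ) (L N m : ℕ) (hL : 1 ≤ L) (hm : m ≤ N) :
    0 < condW (nuW c (segL a L) N) (seg1 a L) m
      (fun z => if z = a then m else if z = a + (L : ℤ) then N - m else 0) := by
  classical
  set η₀ : ℤ → ℕ := fun z => if z = a then m else if z = a + (L : ℤ) then N - m else 0 with hη₀
  have hL' : (1 : ℤ) ≤ (L : ℤ) := by exact_mod_cast hL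
  have ha1 : a ∈ seg1 a L := by unfold seg1; rw [Finset.mem_Ico]; omega
  have ha2 : a + (L : ℤ) ∈ seg2 a L := by unfold seg2; rw [Finset.mem_Ico]; omega
  have haL : a ∈ segL a L := by unfold segL; rw [Finset.mem_Ico]; omega
  have ha2L : a + (L : ℤ) ∈ segL a L := by unfold segL; rw [Finset.mem_Ico]; omega
  have hs1 : (∑ z ∈ seg1 a L, η₀ z) = m := by
    rw [Finset.sum_eq_single_of_mem a ha1]
    · simp [hη₀]
    · intro z hz hza
      have : z ≠ a + (L : ℤ) := by
        unfold seg1 at hz; rw [Finset.mem_Ico] at hz; omega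
      simp [hη₀, hza, this]
  have hs2 : (∑ z ∈ seg2 a L, η₀ z) = N - m := by
    rw [Finset.sum_eq_single_of_mem (a + (L : ℤ)) ha2]
    · have : a + (L : ℤ) ≠ a := by omega
      simp [hη₀, this]
    · intro z hz hza
      have : z ≠ a := by
        unfold seg2 at hz; rw [Finset.mem_Ico] at hz; omega
      simp [hη₀, hza, this]
  have hsL : (∑ z ∈ segL a L, η₀ z) = N := by
    rw [← seg_union a L, Finset.sum_union (seg_disj a L), hs1, hs2]
    omega
  have hsupp : ∀ z, z ∉ segL a L → η₀ z = 0 := by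
    intro z hz
    have h1 : z ≠ a := fun h => hz (h ▸ haL)
    have h2 : z ≠ a + (L : ℤ) := fun h => hz (h ▸ ha2L)
    simp [hη₀, h1, h2]
  rw [condW_nuW_apply, if_pos ⟨hs1, hsupp, hsL⟩]
  exact Finset.prod_pos fun z _ => inv_pos.mpr (cfact_pos hcpos _)

private lemma Zm_pos {c : ℕ → ℝ} (hcpos : ∀ n : ℕ, 0 < n → 0 < c n)
    (a : ℤ) (L N m : ℕ) (hL : 1 ≤ L) (hm : m ≤ N) :
    0 < ∑' η : ℤ → ℕ, condW (nuW c (segL a L) N) (seg1 a L) m η := by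
  have hsumm : Summable (fun η : ℤ → ℕ => condW (nuW c (segL a L) N) (seg1 a L) m η) :=
    summable_vanish c (segL a L) N _ (fun η h => condW_eq_zero h)
  exact Summable.tsum_pos hsumm (fun η => condW_nonneg hcpos _ _ _ _ η) _
    (witness_cond hcpos a L N m hL hm)

private lemma Z_pos {c : ℕ → ℝ} (hcpos : ∀ n : ℕ, 0 < n → 0 < c n)
    (a : ℤ) (L N : ℕ) (hL : 1 ≤ L) :
    0 < ∑' η : ℤ → ℕ, nuW c (segL a L) N η := by
  have hsumm : Summable (fun η : ℤ → ℕ => nuW c (segL a L) N η) :=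
    summable_vanish c (segL a L) N _ (fun η h => h)
  have hw := witness_cond hcpos a L N N hL le_rfl
  apply Summable.tsum_pos hsumm (fun η => nuW_nonneg hcpos _ _ η)
    (fun z => if z = a then N else if z = a + (L : ℤ) then N - N else 0)
  rw [condW_nuW_apply] at hw
  split_ifs at hw with h1
  · unfold nuW
    have hmem : (fun z => if z = a then N else if z = a + (L : ℤ) then N - N else 0) ∈
        {η : ℤ → ℕ | (∀ x, x ∉ segL a L → η x = 0) ∧ (∑ x ∈ segL a L, η x) = N} :=
      ⟨h1.2.1, h1.2.2⟩
    rw [Set.indicator_of_mem hmem]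
    exact hw
  · exact absurd hw (lt_irrefl 0)

private lemma gammaP_eq (c : ℕ → ℝ) (a : ℤ) (L N k : ℕ) :
    gammaP c a L N k = (∑' η : ℤ → ℕ, condW (nuW c (segL a L) N) (seg1 a L) k η) /
      (∑' η : ℤ → ℕ, nuW c (segL a L) N η) := by
  unfold gammaP wE
  congr 1
  apply tsum_congr
  intro η
  by_cases h : (∑ x ∈ seg1 a L, η x) = k <;>
    simp [condW, Set.indicator_apply, h]

/-- Proposition 3.3: representation of the discrete gradient
`ν_Λ^N[f | η̄_{Λ₁}=n] - ν_Λ^N[f | η̄_{Λ₁}=n-1]`. -/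
theorem statement3
    (c : ℕ → ℝ) (a₁ a₂ : ℝ) (k₀ : ℕ)
    (hc0 : c 0 = 0) (hcpos : ∀ n : ℕ, 0 < n → 0 < c n)
    (hLG : ∀ k : ℕ, |c (k + 1) - c k| ≤ a₁)
    (hk₀ : 0 < k₀) (ha₂ : 0 < a₂)
    (hM : ∀ j k : ℕ, j + k₀ ≤ k → a₂ ≤ c k - c j)
    (a : ℤ) (L N : ℕ) (hL : 1 ≤ L) (hN : 1 ≤ N)
    (f : (ℤ → ℕ) → ℝ) (n : ℕ) (hn1 : 1 ≤ n) (hnN : n ≤ N) :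
    wE (condW (nuW c (segL a L) N) (seg1 a L) n) f -
      wE (condW (nuW c (segL a L) N) (seg1 a L) (n - 1)) f =
    (gammaP c a L N (n - 1) / gammaP c a L N n) * (1 / ((n : ℝ) * (L : ℝ))) *
      (wE (condW (nuW c (segL a L) N) (seg1 a L) (n - 1))
          (fun η => ∑ x ∈ seg1 a L, ∑ y ∈ seg2 a L,
            hfun c (η x) * c (η y) * (f (move η y x) - f η))
        + wCov (condW (nuW c (segL a L) N) (seg1 a L) (n - 1)) f
            (fun η => ∑ x ∈ seg1 a L, ∑ y ∈ seg2 a L, hfun c (η x) * c (η y))) := by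
  classical
  obtain ⟨m, rfl⟩ : ∃ m, n = m + 1 := ⟨n - 1, by omega⟩
  have hmN : m + 1 ≤ N := hnN
  have hdisj := seg_disj a L
  have hseg := seg_union a L
  have k1 := key_identity c hc0 hcpos (seg1 a L) (seg2 a L) hdisj N m f
  have k2 := key_identity c hc0 hcpos (seg1 a L) (seg2 a L) hdisj N m (fun _ => (1 : ℝ))
  rw [hseg, seg2_card] at k1 k2
  simp only [mul_one] at k2
  have k3 : (∑' ζ : ℤ → ℕ, condW (nuW c (segL a L) N) (seg1 a L) m ζ *
        (∑ x ∈ seg1 a L, ∑ y ∈ seg2 a L, hfun c (ζ x) * c (ζ y) * f (move ζ y x)))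
      = (∑' ζ : ℤ → ℕ, condW (nuW c (segL a L) N) (seg1 a L) m ζ *
          (∑ x ∈ seg1 a L, ∑ y ∈ seg2 a L, hfun c (ζ x) * c (ζ y) * (f (move ζ y x) - f ζ)))
        + (∑' ζ : ℤ → ℕ, condW (nuW c (segL a L) N) (seg1 a L) m ζ *
          (f ζ * ∑ x ∈ seg1 a L, ∑ y ∈ seg2 a L, hfun c (ζ x) * c (ζ y))) := by
    rw [← Summable.tsum_add
        (summable_vanish c (segL a L) N _
          (fun η h => by simp [condW_eq_zero (Λ₁ := seg1 a L) (k := m) h]))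
        (summable_vanish c (segL a L) N _
          (fun η h => by simp [condW_eq_zero (Λ₁ := seg1 a L) (k := m) h]))]
    apply tsum_congr
    intro ζ
    rw [← mul_add]
    congr 1
    rw [Finset.mul_sum]
    rw [Finset.sum_congr rfl (fun x (_ : x ∈ seg1 a L) =>
      Finset.mul_sum (seg2 a L) (fun y => hfun c (ζ x) * c (ζ y)) (f ζ))]
    rw [← Finset.sum_add_distrib]
    apply Finset.sum_congr rfl; intro x _
    rw [← Finset.sum_add_distrib]
    apply Finset.sum_congr rfl; intro y _
    ring
  have hZn0 : (∑' η : ℤ → ℕ, condW (nuW c (segL a L) N) (seg1 a L) (m+1) η) ≠ 0 :=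
    (Zm_pos hcpos a L N (m+1) hL hmN).ne'
  have hZm0 : (∑' η : ℤ → ℕ, condW (nuW c (segL a L) N) (seg1 a L) m η) ≠ 0 :=
    (Zm_pos hcpos a L N m hL (by omega)).ne'
  have hZ0 : (∑' η : ℤ → ℕ, nuW c (segL a L) N η) ≠ 0 := (Z_pos hcpos a L N hL).ne'
  have hK : ((m : ℝ) + 1) * (L : ℝ) ≠ 0 := by positivity
  have hcast : ((m + 1 : ℕ) : ℝ) = (m : ℝ) + 1 := by push_cast; ring
  simp only [Nat.add_sub_cancel]
  rw [gammaP_eq c a L N m, gammaP_eq c a L N (m+1)]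
  simp only [wE, wCov, hcast]
  set A := ∑' η : ℤ → ℕ, condW (nuW c (segL a L) N) (seg1 a L) (m+1) η * f η with hA
  set B := ∑' η : ℤ → ℕ, condW (nuW c (segL a L) N) (seg1 a L) m η * f η with hB
  set Zn := ∑' η : ℤ → ℕ, condW (nuW c (segL a L) N) (seg1 a L) (m+1) η with hZn
  set Zm := ∑' η : ℤ → ℕ, condW (nuW c (segL a L) N) (seg1 a L) m η with hZm
  set Z := ∑' η : ℤ → ℕ, nuW c (segL a L) N η with hZv
  set S := ∑' ζ : ℤ → ℕ, condW (nuW c (segL a L) N) (seg1 a L) m ζ *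
    (∑ x ∈ seg1 a L, ∑ y ∈ seg2 a L, hfun c (ζ x) * c (ζ y) * f (move ζ y x)) with hS
  set P := ∑' ζ : ℤ → ℕ, condW (nuW c (segL a L) N) (seg1 a L) m ζ *
    (∑ x ∈ seg1 a L, ∑ y ∈ seg2 a L, hfun c (ζ x) * c (ζ y) * (f (move ζ y x) - f ζ)) with hP
  set Q := ∑' ζ : ℤ → ℕ, condW (nuW c (segL a L) N) (seg1 a L) m ζ *
    (f ζ * ∑ x ∈ seg1 a L, ∑ y ∈ seg2 a L, hfun c (ζ x) * c (ζ y)) with hQ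
  set R := ∑' ζ : ℤ → ℕ, condW (nuW c (segL a L) N) (seg1 a L) m ζ *
    (∑ x ∈ seg1 a L, ∑ y ∈ seg2 a L, hfun c (ζ x) * c (ζ y)) with hR
  -- now pure algebra: k1 : ((m:ℝ)+1) * L * A = S, k2 : ((m:ℝ)+1) * L * Zn = R, k3 : S = P + Q
  rw [k3] at k1
  have hAe : A = (P + Q) / (((m : ℝ) + 1) * (L : ℝ)) := by
    rw [eq_div_iff hK]; linarith [k1]
  have hRe : R = ((m : ℝ) + 1) * (L : ℝ) * Zn := k2.symm
  rw [hAe, hRe]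
  field_simp
  ring
end
end

section
/- Let X ≥ 0 be a real random variable and g : [0,∞) → [0,∞) a function such that E(e^{tX}) ≤ e^{t g(t) E(X)} for all t ≥ 0. Then, for all t ≥ 0, E(e^{t√X}) ≤ exp( t √(2g(2t) + g(t)) · √(E(X)) ) + e^{t}. -/
open MeasureTheory

/-- Lemma 4.3: if `E(e^{tX}) ≤ e^{t g(t) E(X)}` for all `t ≥ 0`, then
`E(e^{t√X}) ≤ exp(t √(2g(2t)+g(t)) √(E X)) + e^t` for all `t ≥ 0`. -/
theorem statement17 {Ω : Type*} [MeasurableSpace Ω] (μ : Measure Ω) [IsProbabilityMeasure μ]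
    (X : Ω → ℝ) (hX0 : ∀ ω, 0 ≤ X ω) (hXint : Integrable X μ)
    (g : ℝ → ℝ) (hg : ∀ t : ℝ, 0 ≤ t → 0 ≤ g t)
    (hexpint : ∀ t : ℝ, 0 ≤ t → Integrable (fun ω => Real.exp (t * X ω)) μ)
    (hmgf : ∀ t : ℝ, 0 ≤ t →
      (∫ ω, Real.exp (t * X ω) ∂μ) ≤ Real.exp (t * g t * ∫ ω, X ω ∂μ)) :
    ∀ t : ℝ, 0 ≤ t →
      (∫ ω, Real.exp (t * Real.sqrt (X ω)) ∂μ) ≤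
        Real.exp (t * Real.sqrt (2 * g (2 * t) + g t) * Real.sqrt (∫ ω, X ω ∂μ)) +
          Real.exp t := by
  intro t ht
  set m := ∫ ω, X ω ∂μ with hm_def
  have hm : 0 ≤ m := integral_nonneg hX0
  have hg1 : 0 ≤ g t := hg t ht
  have hg2 : 0 ≤ g (2 * t) := hg _ (by linarith)
  set c : ℝ := (2 * g (2 * t) + g t) * m with hc_def
  have hc : 0 ≤ c := by positivity
  -- elementary sqrt bound
  have hsq : ∀ x : ℝ, 0 ≤ x → Real.sqrt x ≤ (x + 1) / 2 := by
    intro x hx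
    nlinarith [Real.sq_sqrt hx, sq_nonneg (Real.sqrt x - 1), Real.sqrt_nonneg x]
  -- pointwise bound
  have hpt : ∀ ω, Real.exp (t * Real.sqrt (X ω)) ≤
      Real.exp (t * Real.sqrt c) +
        Real.exp (t / 2 - 3 * t / 2 * c) * Real.exp (2 * t * X ω) := by
    intro ω
    have hx := hX0 ω
    rcases le_or_gt (X ω) c with h | h
    · have h1 : Real.exp (t * Real.sqrt (X ω)) ≤ Real.exp (t * Real.sqrt c) :=
        Real.exp_le_exp.2 (mul_le_mul_of_nonneg_left (Real.sqrt_le_sqrt h) ht)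
      have h2 : 0 < Real.exp (t / 2 - 3 * t / 2 * c) * Real.exp (2 * t * X ω) := by
        positivity
      linarith
    · have h1 : t * Real.sqrt (X ω) ≤ t / 2 - 3 * t / 2 * c + 2 * t * X ω := by
        have h2 : t * Real.sqrt (X ω) ≤ t * ((X ω + 1) / 2) :=
          mul_le_mul_of_nonneg_left (hsq _ hx) ht
        nlinarith [mul_le_mul_of_nonneg_left h.le (by linarith : (0:ℝ) ≤ 3 * t / 2)]
      have h2 : Real.exp (t * Real.sqrt (X ω)) ≤
          Real.exp (t / 2 - 3 * t / 2 * c) * Real.exp (2 * t * X ω) := by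
        rw [← Real.exp_add]
        exact Real.exp_le_exp.2 h1
      have h3 : 0 < Real.exp (t * Real.sqrt c) := Real.exp_pos _
      linarith
  -- integrability of the left-hand side
  have hmeas : AEStronglyMeasurable (fun ω => Real.exp (t * Real.sqrt (X ω))) μ := by
    exact (Real.continuous_exp.comp
      (continuous_const.mul Real.continuous_sqrt)).comp_aestronglyMeasurable hXint.1
  have hint1 : Integrable (fun ω => Real.exp (t * Real.sqrt (X ω))) μ := by
    apply Integrable.mono ((hexpint (t / 2) (by linarith)).const_mul (Real.exp (t / 2))) hmeas
    filter_upwards with ω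
    rw [Real.norm_eq_abs, Real.norm_eq_abs, abs_of_nonneg (Real.exp_pos _).le,
      abs_of_nonneg (by positivity)]
    rw [← Real.exp_add]
    apply Real.exp_le_exp.2
    have hx := hX0 ω
    have h2 : t * Real.sqrt (X ω) ≤ t * ((X ω + 1) / 2) :=
      mul_le_mul_of_nonneg_left (hsq _ hx) ht
    nlinarith
  have hint2 : Integrable (fun ω => Real.exp (t * Real.sqrt c) +
      Real.exp (t / 2 - 3 * t / 2 * c) * Real.exp (2 * t * X ω)) μ :=
    (integrable_const _).add ((hexpint (2 * t) (by linarith)).const_mul _)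
  have hstep : (∫ ω, Real.exp (t * Real.sqrt (X ω)) ∂μ) ≤
      Real.exp (t * Real.sqrt c) +
        Real.exp (t / 2 - 3 * t / 2 * c) * ∫ ω, Real.exp (2 * t * X ω) ∂μ := by
    calc (∫ ω, Real.exp (t * Real.sqrt (X ω)) ∂μ)
        ≤ ∫ ω, (Real.exp (t * Real.sqrt c) +
            Real.exp (t / 2 - 3 * t / 2 * c) * Real.exp (2 * t * X ω)) ∂μ :=
          integral_mono hint1 hint2 hpt
      _ = Real.exp (t * Real.sqrt c) +
            Real.exp (t / 2 - 3 * t / 2 * c) * ∫ ω, Real.exp (2 * t * X ω) ∂μ := by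
          rw [integral_add (integrable_const _)
            ((hexpint (2 * t) (by linarith)).const_mul _), integral_const,
            integral_const_mul, probReal_univ]
          simp
  have hmgf2 := hmgf (2 * t) (by linarith)
  have htail : Real.exp (t / 2 - 3 * t / 2 * c) * (∫ ω, Real.exp (2 * t * X ω) ∂μ) ≤
      Real.exp t := by
    calc Real.exp (t / 2 - 3 * t / 2 * c) * (∫ ω, Real.exp (2 * t * X ω) ∂μ)
        ≤ Real.exp (t / 2 - 3 * t / 2 * c) * Real.exp (2 * t * g (2 * t) * m) :=
          mul_le_mul_of_nonneg_left hmgf2 (Real.exp_pos _).le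
      _ = Real.exp (t / 2 - 3 * t / 2 * c + 2 * t * g (2 * t) * m) := by
          rw [← Real.exp_add]
      _ ≤ Real.exp t := by
          apply Real.exp_le_exp.2
          have h1 : 0 ≤ t * g (2 * t) * m := by positivity
          have h2 : 0 ≤ t * g t * m := by positivity
          rw [hc_def]
          nlinarith
  have hsqc : Real.sqrt c = Real.sqrt (2 * g (2 * t) + g t) * Real.sqrt m := by
    rw [hc_def, Real.sqrt_mul (by linarith)]
  calc (∫ ω, Real.exp (t * Real.sqrt (X ω)) ∂μ)
      ≤ Real.exp (t * Real.sqrt c) +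
          Real.exp (t / 2 - 3 * t / 2 * c) * ∫ ω, Real.exp (2 * t * X ω) ∂μ := hstep
    _ ≤ Real.exp (t * Real.sqrt (2 * g (2 * t) + g t) * Real.sqrt m) + Real.exp t := by
        rw [hsqc, ← mul_assoc]
        exact add_le_add_right htail _
    _ = _ := rfl
end
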